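/- Let H₀, H₁, H₂ be complex Hilbert spaces and let ∂̄₀ : Dom(∂̄₀) ⊆ H₀ → H₁, ∂̄₁ : Dom(∂̄₁) ⊆ H₁ → H₂ be densely defined closed operators with ∂̄₁ ∘ ∂̄₀ = 0 on Dom(∂̄₀) with range in Dom(∂̄₁). Suppose the estimate ‖u‖ ≤ C(‖∂̄₁ u‖ + ‖∂̄₀* u‖) holds for all u ∈ Dom(∂̄₁) ∩ Dom(∂̄₀*). Then for every f ∈ Ker(∂̄₁) there exists g ∈ Dom(∂̄₀) with ∂̄₀ g = f and ‖g‖ ≤ C‖f‖. -/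

import Mathlib

open scoped ComplexInnerProductSpace


/-- in a Hilbert complex `H₀ →∂̄₀→ H₁ →∂̄₁→ H₂` with the a priori estimate
`‖u‖ ≤ C(‖∂̄₁u‖ + ‖∂̄₀*u‖)`, every `f ∈ Ker ∂̄₁` admits a solution `∂̄₀ g = f` with
`‖g‖ ≤ C‖f‖`. -/
theorem stmt_5 {H₀ H₁ H₂ : Type*}
    [NormedAddCommGroup H₀] [InnerProductSpace ℂ H₀] [CompleteSpace H₀]
    [NormedAddCommGroup H₁] [InnerProductSpace ℂ H₁] [CompleteSpace H₁]
    [NormedAddCommGroup H₂] [InnerProductSpace ℂ H₂] [CompleteSpace H₂]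
    (D₀ : H₀ →ₗ.[ℂ] H₁) (D₁ : H₁ →ₗ.[ℂ] H₂)
    (hdense₀ : Dense (D₀.domain : Set H₀)) (hdense₁ : Dense (D₁.domain : Set H₁))
    (hclosed₀ : IsClosed (D₀.graph : Set (H₀ × H₁)))
    (hclosed₁ : IsClosed (D₁.graph : Set (H₁ × H₂)))
    (hrange : ∀ x : D₀.domain, D₀ x ∈ D₁.domain)
    (hcomp : ∀ x : D₀.domain, D₁ ⟨D₀ x, hrange x⟩ = 0)
    (C : ℝ) (hC : 0 < C)
    (hest : ∀ (u : H₁) (h1 : u ∈ D₁.domain) (h0 : u ∈ D₀.adjoint.domain),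
      ‖u‖ ≤ C * (‖D₁ ⟨u, h1⟩‖ + ‖D₀.adjoint ⟨u, h0⟩‖)) :
    ∀ (f : H₁) (hf : f ∈ D₁.domain), D₁ ⟨f, hf⟩ = 0 →
      ∃ (g : H₀) (hg : g ∈ D₀.domain), D₀ ⟨g, hg⟩ = f ∧ ‖g‖ ≤ C * ‖f‖ := by
  classical
  intro f hf hf0
  set T := D₀.adjoint with hT
  -- the kernel of D₁ as a closed submodule of H₁
  set K : Submodule ℂ H₁ := D₁.graph.comap (LinearMap.prod LinearMap.id 0) with hKdef
  have hKmem : ∀ x : H₁, x ∈ K ↔ (x, (0 : H₂)) ∈ D₁.graph := by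
    intro x
    simp [hKdef, Submodule.mem_comap, LinearMap.prod_apply]
  have hKclosed : IsClosed (K : Set H₁) := by
    have hset : (K : Set H₁) = (fun x : H₁ => (x, (0 : H₂))) ⁻¹' (D₁.graph : Set (H₁ × H₂)) := by
      ext x; simpa using hKmem x
    rw [hset]
    exact hclosed₁.preimage (continuous_id.prodMk continuous_const)
  haveI : CompleteSpace K := hKclosed.completeSpace_coe
  have hfK : f ∈ K := by
    rw [hKmem]
    rw [LinearPMap.mem_graph_iff]
    exact ⟨⟨f, hf⟩, rfl, hf0⟩
  -- elements of Kᗮ lie in the kernel of the adjoint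
  have hKperp : ∀ w : H₁, w ∈ Kᗮ → ∃ hw : w ∈ T.domain, T ⟨w, hw⟩ = 0 := by
    intro w hwperp
    have h1 : ∀ x : D₀.domain, (inner ℂ ((0 : H₀)) ((x : H₀)) : ℂ) = (inner ℂ (w) (D₀ x) : ℂ) := by
      intro x
      have hxK : D₀ x ∈ K := by
        rw [hKmem, LinearPMap.mem_graph_iff]
        exact ⟨⟨D₀ x, hrange x⟩, rfl, hcomp x⟩
      have : (inner ℂ (D₀ x) (w) : ℂ) = 0 := (Submodule.mem_orthogonal K w).mp hwperp _ hxK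
      rw [inner_zero_left, ← inner_conj_symm, this, map_zero]
    have hw : w ∈ T.domain :=
      LinearPMap.mem_adjoint_domain_of_exists w ⟨0, h1⟩
    exact ⟨hw, LinearPMap.adjoint_apply_eq hdense₀ ⟨w, hw⟩ h1⟩
  -- the key a priori estimate for the linear functional
  have hkey : ∀ u : T.domain, ‖((inner ℂ (f) ((u : H₁)) : ℂ))‖ ≤ C * ‖f‖ * ‖T u‖ := by
    intro u
    set v : H₁ := (K.orthogonalProjection (u : H₁) : H₁) with hvdef
    have hvK : v ∈ K := (K.orthogonalProjection (u : H₁)).2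
    have hwperp : (u : H₁) - v ∈ Kᗮ := K.sub_starProjection_mem_orthogonal _
    obtain ⟨hwdom, hw0⟩ := hKperp _ hwperp
    have hvdom : v ∈ T.domain := by
      have : v = (u : H₁) - ((u : H₁) - v) := (sub_sub_cancel _ _).symm
      rw [this]; exact Submodule.sub_mem _ u.2 hwdom
    have hveq : (⟨v, hvdom⟩ : T.domain) = u - ⟨(u : H₁) - v, hwdom⟩ := by
      apply Subtype.ext; simp
    have hTv : T ⟨v, hvdom⟩ = T u := by
      rw [hveq, T.map_sub, hw0, sub_zero]
    -- v is in the kernel of D₁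
    rw [hKmem, LinearPMap.mem_graph_iff] at hvK
    obtain ⟨y, hy1, hy2⟩ := hvK
    have hy1' : (y : H₁) = v := hy1
    have hv1 : v ∈ D₁.domain := hy1' ▸ y.2
    have hD1v : D₁ ⟨v, hv1⟩ = 0 := by
      have : (⟨v, hv1⟩ : D₁.domain) = y := Subtype.ext hy1'.symm
      rw [this]; exact hy2
    have hvnorm : ‖v‖ ≤ C * ‖T u‖ := by
      have := hest v hv1 hvdom
      rw [hD1v, hTv] at this
      simpa using this
    have hsplit : (inner ℂ (f) ((u : H₁)) : ℂ) = (inner ℂ (f) (v) : ℂ) := by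
      have h0 : (inner ℂ (f) ((u : H₁) - v) : ℂ) = 0 :=
        Submodule.inner_right_of_mem_orthogonal hfK hwperp
      have hsum : v + ((u : H₁) - v) = (u : H₁) := by abel
      have : (inner ℂ (f) ((u : H₁)) : ℂ) = (inner ℂ (f) (v) : ℂ) + (inner ℂ (f) ((u : H₁) - v) : ℂ) := by
        rw [← inner_add_right, hsum]
      rw [this, h0, add_zero]
    rw [hsplit]
    calc ‖((inner ℂ (f) (v) : ℂ))‖ ≤ ‖f‖ * ‖v‖ := norm_inner_le_norm _ _
      _ ≤ ‖f‖ * (C * ‖T u‖) := by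
          apply mul_le_mul_of_nonneg_left hvnorm (norm_nonneg f)
      _ = C * ‖f‖ * ‖T u‖ := by ring
  -- build the continuous linear functional on the range of T
  set φ : T.domain →ₗ[ℂ] H₀ := T.toFun with hφdef
  set ψ : T.domain →ₗ[ℂ] ℂ := (innerₛₗ ℂ f).comp T.domain.subtype with hψdef
  have hψ : ∀ u : T.domain, ψ u = (inner ℂ (f) ((u : H₁)) : ℂ) := fun u => rfl
  have hφ : ∀ u : T.domain, φ u = T u := fun u => rfl
  have hker : LinearMap.ker φ ≤ LinearMap.ker ψ := by
    intro u hu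
    rw [LinearMap.mem_ker] at hu ⊢
    have := hkey u
    rw [← hφ, hu] at this
    simp only [norm_zero, mul_zero] at this
    rw [hψ]
    exact norm_le_zero_iff.mp this
  set ℓ₀ : (T.domain ⧸ LinearMap.ker φ) →ₗ[ℂ] ℂ := (LinearMap.ker φ).liftQ ψ hker with hℓ₀def
  set ℓ : LinearMap.range φ →ₗ[ℂ] ℂ := ℓ₀.comp (φ.quotKerEquivRange).symm.toLinearMap with hℓdef
  have hℓ : ∀ (u : T.domain) (h : φ u ∈ LinearMap.range φ), ℓ ⟨φ u, h⟩ = ψ u := by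
    intro u h
    have h1 : (φ.quotKerEquivRange).symm ⟨φ u, h⟩ = (LinearMap.ker φ).mkQ u :=
      LinearMap.quotKerEquivRange_symm_apply_image φ u h
    simp only [hℓdef, LinearMap.comp_apply, LinearEquiv.coe_toLinearMap, h1, hℓ₀def,
      Submodule.mkQ_apply, Submodule.liftQ_apply]
  have hbound : ∀ m : LinearMap.range φ, ‖ℓ m‖ ≤ C * ‖f‖ * ‖m‖ := by
    rintro ⟨m, u, rfl⟩
    rw [hℓ u ⟨u, rfl⟩, hψ]
    have : ‖(⟨φ u, ⟨u, rfl⟩⟩ : LinearMap.range φ)‖ = ‖T u‖ := rfl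
    rw [this]
    exact hkey u
  set ℓ' : LinearMap.range φ →L[ℂ] ℂ := ℓ.mkContinuous (C * ‖f‖) hbound with hℓ'def
  obtain ⟨L, hL, hLnorm⟩ := exists_extension_norm_eq (LinearMap.range φ) ℓ'
  set g : H₀ := (InnerProductSpace.toDual ℂ H₀).symm L with hgdef
  have hg1 : ∀ x : H₀, (inner ℂ (g) (x) : ℂ) = L x := fun x => InnerProductSpace.toDual_symm_apply
  have hgid : ∀ u : T.domain, (inner ℂ (g) (T u) : ℂ) = (inner ℂ (f) ((u : H₁)) : ℂ) := by
    intro u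
    have hmem : φ u ∈ LinearMap.range φ := ⟨u, rfl⟩
    have h2 : L (φ u) = ℓ' ⟨φ u, hmem⟩ := (hL ⟨φ u, hmem⟩)
    have h3 : ℓ' ⟨φ u, hmem⟩ = ℓ ⟨φ u, hmem⟩ := rfl
    rw [← hφ, hg1, h2, h3, hℓ u hmem, hψ]
  have hgnorm : ‖g‖ ≤ C * ‖f‖ := by
    have h1 : ‖g‖ = ‖L‖ := by
      rw [hgdef]; exact LinearIsometryEquiv.norm_map _ L
    rw [h1, hLnorm]
    exact ℓ.mkContinuous_norm_le (by positivity) hbound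
  -- now show (g, f) belongs to the graph of D₀ using the ℓ² product structure
  set e : WithLp 2 (H₀ × H₁) ≃L[ℂ] H₀ × H₁ := WithLp.prodContinuousLinearEquiv 2 ℂ H₀ H₁
    with hedef
  set G : Submodule ℂ (WithLp 2 (H₀ × H₁)) :=
    D₀.graph.comap (e : WithLp 2 (H₀ × H₁) →ₗ[ℂ] H₀ × H₁) with hGdef
  have hGclosed : IsClosed (G : Set (WithLp 2 (H₀ × H₁))) := by
    have hset : (G : Set (WithLp 2 (H₀ × H₁))) = ⇑e ⁻¹' (D₀.graph : Set (H₀ × H₁)) := rfl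
    rw [hset]
    exact hclosed₀.preimage e.continuous
  haveI : CompleteSpace G := hGclosed.completeSpace_coe
  have hGG : Gᗮᗮ = G := Submodule.orthogonal_orthogonal G
  have hpmem : e.symm (g, f) ∈ Gᗮᗮ := by
    rw [Submodule.mem_orthogonal]
    intro w hw
    -- w.snd is in the domain of the adjoint with T w.snd = -w.fst
    have hwg : ∀ x : D₀.domain, (inner ℂ ((x : H₀)) (w.fst) : ℂ) + (inner ℂ (D₀ x) (w.snd) : ℂ) = 0 := by
      intro x
      have hmem : e.symm ((x : H₀), D₀ x) ∈ G := D₀.mem_graph x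
      have := (Submodule.mem_orthogonal G w).mp hw _ hmem
      rwa [WithLp.prod_inner_apply] at this
    have h1 : ∀ x : D₀.domain, (inner ℂ (-w.fst) ((x : H₀)) : ℂ) = (inner ℂ (w.snd) (D₀ x) : ℂ) := by
      intro x
      have := hwg x
      have h2 : (inner ℂ (D₀ x) (w.snd) : ℂ) = -(inner ℂ ((x : H₀)) (w.fst) : ℂ) := by linear_combination this
      rw [← inner_conj_symm w.snd, h2, map_neg, inner_conj_symm, inner_neg_left]
    have hbdom : w.snd ∈ T.domain :=
      LinearPMap.mem_adjoint_domain_of_exists w.snd ⟨-w.fst, h1⟩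
    have hTb : T ⟨w.snd, hbdom⟩ = -w.fst :=
      LinearPMap.adjoint_apply_eq hdense₀ ⟨w.snd, hbdom⟩ h1
    rw [WithLp.prod_inner_apply]
    show (inner ℂ (w.fst) (g) : ℂ) + (inner ℂ (w.snd) (f) : ℂ) = 0
    have h4 : (inner ℂ (w.fst) (g) : ℂ) = -(inner ℂ (w.snd) (f) : ℂ) := by
      have h5 : (inner ℂ (g) (T ⟨w.snd, hbdom⟩) : ℂ) = (inner ℂ (f) (w.snd) : ℂ) := hgid ⟨w.snd, hbdom⟩
      rw [hTb, inner_neg_right] at h5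
      have h6 : (inner ℂ (g) (w.fst) : ℂ) = -(inner ℂ (f) (w.snd) : ℂ) := by linear_combination -h5
      rw [← inner_conj_symm w.fst, h6, map_neg, inner_conj_symm]
    rw [h4]; ring
  rw [hGG] at hpmem
  have hgraph : (g, f) ∈ D₀.graph := hpmem
  rw [LinearPMap.mem_graph_iff] at hgraph
  obtain ⟨y, hy1, hy2⟩ := hgraph
  have hy1' : (y : H₀) = g := hy1
  refine ⟨g, hy1' ▸ y.2, ?_, hgnorm⟩
  have : (⟨g, hy1' ▸ y.2⟩ : D₀.domain) = y := Subtype.ext hy1'.symm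
  rw [this]; exact hy2
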